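/- arXiv:1806.07307 — 2 statements merged into one kernel-verified Lean document; each statement's English description precedes it below -/
import Mathlib

section
/- For any matrix A ∈ ℝ^{m×n} and a standard Gaussian random vector z ∈ ℝ^n, the expected Euclidean norm of Az satisfies E‖Az‖ ≥ √(2/π) ‖A‖_F, where ‖A‖_F is the Frobenius norm. -/
open MeasureTheory ProbabilityTheory Real
open scoped NNReal ENNReal

lemma int_Ioi_mul_exp {b : ℝ} (hb : 0 < b) :
    ∫ x in Set.Ioi (0:ℝ), x * rexp (-b * x ^ 2) = (2 * b)⁻¹ := by
  have hderiv : ∀ x ∈ Set.Ici (0:ℝ),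
      HasDerivAt (fun x : ℝ => -(2 * b)⁻¹ * rexp (-b * x ^ 2)) (x * rexp (-b * x ^ 2)) x := by
    intro x _
    have h1 : HasDerivAt (fun x : ℝ => -b * x ^ 2) (-b * (2 * x)) x := by
      simpa using ((hasDerivAt_pow 2 x).const_mul (-b))
    have h2 := (h1.exp).const_mul (-(2 * b)⁻¹)
    refine h2.congr_deriv ?_
    have hb0 : b ≠ 0 := hb.ne'
    field_simp
  have hint : IntegrableOn (fun x : ℝ => x * rexp (-b * x ^ 2)) (Set.Ioi 0) :=
    (integrable_mul_exp_neg_mul_sq hb).integrableOn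
  have hlim : Filter.Tendsto (fun x : ℝ => -(2 * b)⁻¹ * rexp (-b * x ^ 2))
      Filter.atTop (nhds 0) := by
    rw [show (0:ℝ) = -(2 * b)⁻¹ * 0 by ring]
    refine Filter.Tendsto.const_mul _ ?_
    refine Real.tendsto_exp_atBot.comp ?_
    have : Filter.Tendsto (fun x : ℝ => b * x ^ 2) Filter.atTop Filter.atTop :=
      (Filter.tendsto_pow_atTop (by norm_num)).const_mul_atTop hb
    have := Filter.tendsto_neg_atTop_atBot.comp this
    simpa [Function.comp_def, neg_mul] using this
  have := integral_Ioi_of_hasDerivAt_of_tendsto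
    (Continuous.continuousWithinAt (by continuity))
    (fun x hx => hderiv x (Set.mem_Ici.mpr hx.le)) hint hlim
  rw [this]
  simp

lemma gaussPDF_nn (v : ℝ≥0) :
    gaussianPDF 0 v = fun x => ((Real.toNNReal (gaussianPDFReal 0 v x) : ℝ≥0) : ℝ≥0∞) := by
  ext x; rfl

lemma gaussPDF_nn_meas (v : ℝ≥0) :
    Measurable (fun x => Real.toNNReal (gaussianPDFReal 0 v x)) :=
  (measurable_gaussianPDFReal 0 v).real_toNNReal

lemma gauss_smul (v : ℝ≥0) (g : ℝ → ℝ) (x : ℝ) :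
    (Real.toNNReal (gaussianPDFReal 0 v x)) • g x = gaussianPDFReal 0 v x * g x := by
  rw [NNReal.smul_def, Real.coe_toNNReal _ (gaussianPDFReal_nonneg 0 v x), smul_eq_mul]

lemma abs_mul_pdf_eq (v : ℝ≥0) (hv : v ≠ 0) :
    (fun x => gaussianPDFReal 0 v x * |x|)
      = fun x => (√(2 * π * v))⁻¹ * (|x| * rexp (-(2*(v:ℝ))⁻¹ * |x| ^ 2)) := by
  have hv' : (0:ℝ) < v := lt_of_le_of_ne v.coe_nonneg (by exact_mod_cast (Ne.symm hv))
  ext x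
  rw [gaussianPDFReal]
  rw [sq_abs]
  rw [show -(x - 0) ^ 2 / (2 * (v:ℝ)) = -(2*(v:ℝ))⁻¹ * x ^ 2 by field_simp; ring]
  ring

lemma integrable_pdf_abs (v : ℝ≥0) (hv : v ≠ 0) :
    Integrable (fun x => gaussianPDFReal 0 v x * |x|) := by
  have hv' : (0:ℝ) < v := lt_of_le_of_ne v.coe_nonneg (by exact_mod_cast (Ne.symm hv))
  rw [abs_mul_pdf_eq v hv]
  have hb : (0:ℝ) < (2*(v:ℝ))⁻¹ := by positivity
  have h := (integrable_mul_exp_neg_mul_sq hb).abs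
  refine (h.congr ?_).const_mul _
  filter_upwards with x
  rw [abs_mul, abs_of_pos (Real.exp_pos _), sq_abs]

lemma integrable_abs_gauss (v : ℝ≥0) : Integrable (fun x : ℝ => |x|) (gaussianReal 0 v) := by
  by_cases hv : v = 0
  · simp only [hv, gaussianReal_zero_var]
    refine ⟨aestronglyMeasurable_id.norm.congr ?_, ?_⟩
    · filter_upwards with x; simp [Real.norm_eq_abs]
    · rw [HasFiniteIntegral]
      rw [lintegral_dirac]
      simp
  · rw [gaussianReal_of_var_ne_zero _ hv, gaussPDF_nn v,
      integrable_withDensity_iff_integrable_coe_smul (gaussPDF_nn_meas v)]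
    refine (integrable_pdf_abs v hv).congr ?_
    filter_upwards with x
    rw [← gauss_smul v (fun x => |x|) x]
    rfl

lemma integral_abs_gauss (v : ℝ≥0) :
    ∫ x, |x| ∂(gaussianReal 0 v) = Real.sqrt (2 / π) * Real.sqrt v := by
  by_cases hv : v = 0
  · simp [hv, gaussianReal_zero_var]
  · have hv' : (0:ℝ) < v := lt_of_le_of_ne v.coe_nonneg (by exact_mod_cast (Ne.symm hv))
    rw [gaussianReal_of_var_ne_zero _ hv, gaussPDF_nn v,
      integral_withDensity_eq_integral_smul (gaussPDF_nn_meas v)]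
    simp_rw [gauss_smul v (fun x => |x|)]
    rw [abs_mul_pdf_eq v hv, integral_const_mul]
    have hb : (0:ℝ) < (2*(v:ℝ))⁻¹ := by positivity
    rw [integral_comp_abs (f := fun x => x * rexp (-(2*(v:ℝ))⁻¹ * x ^ 2)),
      int_Ioi_mul_exp hb]
    have h2 : (2 * ((2*(v:ℝ))⁻¹))⁻¹ = (v:ℝ) := by field_simp
    rw [h2]
    rw [show (√(2 * π * v))⁻¹ * (2 * (v:ℝ)) = √((2*π*(v:ℝ))⁻¹) * √((2*(v:ℝ))^2) by
      rw [Real.sqrt_inv, Real.sqrt_sq (by positivity)]]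
    rw [← Real.sqrt_mul (by positivity), ← Real.sqrt_mul (by positivity)]
    congr 1
    have hπ := Real.pi_pos
    field_simp

lemma conv_pdf_eq (v₁ v₂ : ℝ≥0) (h₁ : v₁ ≠ 0) (h₂ : v₂ ≠ 0) (y : ℝ) :
    (fun x => gaussianPDFReal 0 v₁ x * gaussianPDFReal x v₂ y)
      = fun x => ((√(2*π*(v₁:ℝ)))⁻¹ * (√(2*π*(v₂:ℝ)))⁻¹
          * rexp (-y^2/(2*((v₁:ℝ)+(v₂:ℝ)))))
          * rexp (-(((v₁:ℝ)+(v₂:ℝ))/(2*(v₁:ℝ)*(v₂:ℝ)))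
              * (x - (v₁:ℝ)*y/((v₁:ℝ)+(v₂:ℝ)))^2) := by
  have ha : (0:ℝ) < v₁ := lt_of_le_of_ne v₁.coe_nonneg (by exact_mod_cast (Ne.symm h₁))
  have hb : (0:ℝ) < v₂ := lt_of_le_of_ne v₂.coe_nonneg (by exact_mod_cast (Ne.symm h₂))
  ext x
  simp only [gaussianPDFReal]
  have hab : (0:ℝ) < (v₁:ℝ) + (v₂:ℝ) := by positivity
  have hE : rexp (-(x - 0)^2/(2*(v₁:ℝ))) * rexp (-(y - x)^2/(2*(v₂:ℝ)))
      = rexp (-y^2/(2*((v₁:ℝ)+(v₂:ℝ))))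
        * rexp (-(((v₁:ℝ)+(v₂:ℝ))/(2*(v₁:ℝ)*(v₂:ℝ)))
            * (x - (v₁:ℝ)*y/((v₁:ℝ)+(v₂:ℝ)))^2) := by
    rw [← Real.exp_add, ← Real.exp_add]
    congr 1
    field_simp
    ring
  calc (√(2*π*(v₁:ℝ)))⁻¹ * rexp (-(x - 0)^2/(2*(v₁:ℝ)))
        * ((√(2*π*(v₂:ℝ)))⁻¹ * rexp (-(y - x)^2/(2*(v₂:ℝ))))
      = (√(2*π*(v₁:ℝ)))⁻¹ * (√(2*π*(v₂:ℝ)))⁻¹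
        * (rexp (-(x - 0)^2/(2*(v₁:ℝ))) * rexp (-(y - x)^2/(2*(v₂:ℝ)))) := by ring
    _ = _ := by rw [hE]; ring

lemma integrable_conv_pdf (v₁ v₂ : ℝ≥0) (h₁ : v₁ ≠ 0) (h₂ : v₂ ≠ 0) (y : ℝ) :
    Integrable (fun x => gaussianPDFReal 0 v₁ x * gaussianPDFReal x v₂ y) := by
  have ha : (0:ℝ) < v₁ := lt_of_le_of_ne v₁.coe_nonneg (by exact_mod_cast (Ne.symm h₁))
  have hb : (0:ℝ) < v₂ := lt_of_le_of_ne v₂.coe_nonneg (by exact_mod_cast (Ne.symm h₂))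
  rw [conv_pdf_eq v₁ v₂ h₁ h₂ y]
  have hk : (0:ℝ) < ((v₁:ℝ)+(v₂:ℝ))/(2*(v₁:ℝ)*(v₂:ℝ)) := by positivity
  exact ((integrable_exp_neg_mul_sq hk).comp_sub_right _).const_mul _

lemma conv_pdf (v₁ v₂ : ℝ≥0) (h₁ : v₁ ≠ 0) (h₂ : v₂ ≠ 0) (y : ℝ) :
    ∫ x, gaussianPDFReal 0 v₁ x * gaussianPDFReal x v₂ y
      = gaussianPDFReal 0 (v₁ + v₂) y := by
  have ha : (0:ℝ) < v₁ := lt_of_le_of_ne v₁.coe_nonneg (by exact_mod_cast (Ne.symm h₁))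
  have hb : (0:ℝ) < v₂ := lt_of_le_of_ne v₂.coe_nonneg (by exact_mod_cast (Ne.symm h₂))
  have hab : (0:ℝ) < (v₁:ℝ) + (v₂:ℝ) := by positivity
  have hk : (0:ℝ) < ((v₁:ℝ)+(v₂:ℝ))/(2*(v₁:ℝ)*(v₂:ℝ)) := by positivity
  rw [conv_pdf_eq v₁ v₂ h₁ h₂ y, integral_const_mul,
    integral_sub_right_eq_self (μ := volume)
      (fun x => rexp (-(((v₁:ℝ)+(v₂:ℝ))/(2*(v₁:ℝ)*(v₂:ℝ))) * x^2)) _,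
    integral_gaussian]
  rw [gaussianPDFReal]
  push_cast
  rw [show (√(2*π*(v₁:ℝ)))⁻¹ * (√(2*π*(v₂:ℝ)))⁻¹ * rexp (-y^2/(2*((v₁:ℝ)+(v₂:ℝ))))
        * √(π / (((v₁:ℝ)+(v₂:ℝ))/(2*(v₁:ℝ)*(v₂:ℝ))))
      = (√((2*π*(v₁:ℝ))⁻¹) * √((2*π*(v₂:ℝ))⁻¹)
          * √(π / (((v₁:ℝ)+(v₂:ℝ))/(2*(v₁:ℝ)*(v₂:ℝ)))))
        * rexp (-y^2/(2*((v₁:ℝ)+(v₂:ℝ)))) by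
      rw [Real.sqrt_inv, Real.sqrt_inv]; ring]
  rw [← Real.sqrt_mul (by positivity), ← Real.sqrt_mul (by positivity)]
  rw [sub_zero]
  congr 2
  · rw [← Real.sqrt_inv]
    congr 1
    have hπ := Real.pi_pos
    field_simp

lemma lint_conv (v₁ v₂ : ℝ≥0) (h₁ : v₁ ≠ 0) (h₂ : v₂ ≠ 0) (y : ℝ) :
    ∫⁻ x, gaussianPDF 0 v₁ x * gaussianPDF x v₂ y = gaussianPDF 0 (v₁ + v₂) y := by
  simp_rw [gaussianPDF,
    ← ENNReal.ofReal_mul (gaussianPDFReal_nonneg 0 v₁ _)]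
  rw [← ofReal_integral_eq_lintegral_ofReal (integrable_conv_pdf v₁ v₂ h₁ h₂ y)
      (ae_of_all _ fun x => mul_nonneg (gaussianPDFReal_nonneg _ _ _)
        (gaussianPDFReal_nonneg _ _ _)),
    conv_pdf v₁ v₂ h₁ h₂ y]

lemma joint_meas2 (v₂ : ℝ≥0) :
    Measurable (fun p : ℝ × ℝ => gaussianPDF p.1 v₂ p.2) := by
  simp only [gaussianPDF, gaussianPDFReal]
  apply Measurable.ennreal_ofReal
  fun_prop

lemma joint_meas (v₁ v₂ : ℝ≥0) :
    Measurable (fun p : ℝ × ℝ => gaussianPDF 0 v₁ p.1 * gaussianPDF p.1 v₂ p.2) :=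
  ((measurable_gaussianPDF 0 v₁).comp measurable_fst).mul (joint_meas2 v₂)

lemma gaussian_conv (v₁ v₂ : ℝ≥0) :
    Measure.map (fun p : ℝ × ℝ => p.1 + p.2)
      ((gaussianReal 0 v₁).prod (gaussianReal 0 v₂)) = gaussianReal 0 (v₁ + v₂) := by
  by_cases h₁ : v₁ = 0
  · subst h₁
    rw [gaussianReal_zero_var, Measure.dirac_prod,
      Measure.map_map measurable_add measurable_prodMk_left]
    have : ((fun p : ℝ × ℝ => p.1 + p.2) ∘ Prod.mk (0:ℝ)) = fun y : ℝ => (0:ℝ) + y := rfl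
    rw [this, gaussianReal_map_const_add (0:ℝ), add_zero, zero_add]
  by_cases h₂ : v₂ = 0
  · subst h₂
    rw [gaussianReal_zero_var, Measure.prod_dirac,
      Measure.map_map measurable_add measurable_prodMk_right]
    have : ((fun p : ℝ × ℝ => p.1 + p.2) ∘ (fun x : ℝ => (x, (0:ℝ)))) = fun x : ℝ => x + 0 := rfl
    rw [this, gaussianReal_map_add_const (0:ℝ), add_zero, add_zero]
  have hne : v₁ + v₂ ≠ 0 := by
    intro h
    exact h₁ (by simpa using congrArg (·) h ▸ (add_eq_zero.mp h).1)
  ext s hs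
  rw [Measure.map_apply measurable_add hs,
    Measure.prod_apply (measurable_add hs)]
  have hmap : ∀ x : ℝ, (gaussianReal 0 v₂) (Prod.mk x ⁻¹' ((fun p : ℝ × ℝ => p.1 + p.2) ⁻¹' s))
      = ∫⁻ y in s, gaussianPDF x v₂ y := by
    intro x
    have hpre : (Prod.mk x ⁻¹' ((fun p : ℝ × ℝ => p.1 + p.2) ⁻¹' s))
        = (fun y : ℝ => x + y) ⁻¹' s := rfl
    rw [hpre, ← Measure.map_apply (measurable_const_add x) hs,
      gaussianReal_map_const_add (μ := 0) (v := v₂) x, zero_add,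
      gaussianReal_apply _ h₂ s]
  simp_rw [hmap]
  have hFmeas : Measurable (fun x : ℝ => ∫⁻ y in s, gaussianPDF x v₂ y) :=
    Measurable.lintegral_prod_right' (joint_meas2 v₂)
  rw [gaussianReal_of_var_ne_zero _ h₁,
    lintegral_withDensity_eq_lintegral_mul _ (measurable_gaussianPDF 0 v₁) hFmeas]
  simp only [Pi.mul_apply]
  have hswap : ∫⁻ x, gaussianPDF 0 v₁ x * ∫⁻ y in s, gaussianPDF x v₂ y
      = ∫⁻ y in s, ∫⁻ x, gaussianPDF 0 v₁ x * gaussianPDF x v₂ y := by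
    have : ∀ x : ℝ, gaussianPDF 0 v₁ x * ∫⁻ y in s, gaussianPDF x v₂ y
        = ∫⁻ y in s, gaussianPDF 0 v₁ x * gaussianPDF x v₂ y := fun x =>
      (lintegral_const_mul _ (measurable_gaussianPDF x v₂)).symm
    simp_rw [this]
    exact lintegral_lintegral_swap (joint_meas v₁ v₂).aemeasurable
  rw [hswap]
  simp_rw [lint_conv v₁ v₂ h₁ h₂]
  rw [gaussianReal_apply _ hne s]

lemma meas_S {n : ℕ} (a : Fin n → ℝ) :
    Measurable (fun z : Fin n → ℝ => ∑ j, a j * z j) :=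
  Finset.measurable_sum _ fun j _ => (measurable_pi_apply j).const_mul _

lemma map_sum_gauss : ∀ (n : ℕ) (a : Fin n → ℝ),
    Measure.map (fun z : Fin n → ℝ => ∑ j, a j * z j)
        (Measure.pi fun _ => gaussianReal 0 1)
      = gaussianReal 0 (∑ j, (⟨(a j)^2, sq_nonneg _⟩ : ℝ≥0)) := by
  intro n
  induction n with
  | zero =>
    intro a
    simp only [Finset.univ_eq_empty, Finset.sum_empty]
    rw [Measure.map_const, measure_univ, one_smul]
    exact (gaussianReal_zero_var 0).symm
  | succ n ih =>
    intro a
    set e := MeasurableEquiv.piFinSuccAbove (fun _ : Fin (n+1) => ℝ) 0 with he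
    have hmp := measurePreserving_piFinSuccAbove (fun _ : Fin (n+1) => gaussianReal 0 1) 0
    have key : (fun z : Fin (n+1) → ℝ => ∑ j, a j * z j)
        = (fun p : ℝ × (Fin n → ℝ) => a 0 * p.1 + ∑ j : Fin n, a j.succ * p.2 j) ∘ e := by
      ext z
      simp [he, MeasurableEquiv.piFinSuccAbove, MeasurableEquiv.piFinSuccAbove_apply,
        Fin.sum_univ_succ, Fin.succAbove_zero, Fin.tail]
    rw [key, ← Measure.map_map (by fun_prop) e.measurable, hmp.map_eq]
    have split : (fun p : ℝ × (Fin n → ℝ) => a 0 * p.1 + ∑ j : Fin n, a j.succ * p.2 j)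
        = (fun q : ℝ × ℝ => q.1 + q.2) ∘
            (Prod.map (fun x : ℝ => a 0 * x) (fun w : Fin n → ℝ => ∑ j, a j.succ * w j)) := rfl
    rw [split, ← Measure.map_map measurable_add
        ((measurable_id'.const_mul _).prodMap (meas_S _)),
      ← Measure.map_prod_map _ _ (measurable_id'.const_mul _) (meas_S _),
      gaussianReal_map_const_mul (a 0), mul_zero, mul_one, ih (fun j => a j.succ),
      gaussian_conv]
    congr 1
    exact (Fin.sum_univ_succ (M := ℝ≥0) (fun j => (⟨(a j)^2, sq_nonneg _⟩ : ℝ≥0))).symm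

lemma integrable_abs_S {n : ℕ} (a : Fin n → ℝ) :
    Integrable (fun z : Fin n → ℝ => |∑ j, a j * z j|)
      (Measure.pi fun _ : Fin n => gaussianReal 0 1) := by
  have h := integrable_abs_gauss (∑ j, (⟨(a j)^2, sq_nonneg _⟩ : ℝ≥0))
  rw [← map_sum_gauss n a] at h
  exact (integrable_map_measure (aestronglyMeasurable_id.norm.congr
    (by filter_upwards with x; simp [Real.norm_eq_abs]))
    (meas_S a).aemeasurable).mp h

lemma E_abs_S {n : ℕ} (a : Fin n → ℝ) :
    ∫ z : Fin n → ℝ, |∑ j, a j * z j| ∂(Measure.pi fun _ : Fin n => gaussianReal 0 1)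
      = Real.sqrt (2 / π) * Real.sqrt (∑ j, (a j)^2) := by
  have hmeas : AEStronglyMeasurable (fun x : ℝ => |x|)
      (Measure.map (fun z : Fin n → ℝ => ∑ j, a j * z j)
        (Measure.pi fun _ : Fin n => gaussianReal 0 1)) :=
    aestronglyMeasurable_id.norm.congr (by filter_upwards with x; simp [Real.norm_eq_abs])
  rw [← integral_map (meas_S a).aemeasurable hmeas, map_sum_gauss n a, integral_abs_gauss]
  congr 1
  erw [NNReal.coe_sum]
  rfl

theorem stmt_0 (m n : ℕ) (A : Matrix (Fin m) (Fin n) ℝ) :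
    Real.sqrt (2 / Real.pi) * Real.sqrt (∑ i, ∑ j, (A i j) ^ 2) ≤
      ∫ z : Fin n → ℝ, Real.sqrt (∑ i, (A.mulVec z i) ^ 2)
        ∂(Measure.pi fun _ : Fin n => gaussianReal 0 1) := by
  set μ := Measure.pi fun _ : Fin n => gaussianReal 0 1 with hμ
  have hmv : ∀ (z : Fin n → ℝ) (i : Fin m), A.mulVec z i = ∑ j, A i j * z j := by
    intro z i
    simp [Matrix.mulVec, dotProduct]
  simp_rw [hmv]
  set c : Fin m → ℝ := fun i => Real.sqrt (∑ j, (A i j)^2) with hc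
  have hc_nonneg : ∀ i, 0 ≤ c i := fun i => Real.sqrt_nonneg _
  have hci_sq : ∀ i, (c i)^2 = ∑ j, (A i j)^2 := fun i =>
    Real.sq_sqrt (Finset.sum_nonneg fun j _ => sq_nonneg _)
  have hSS_nonneg : (0:ℝ) ≤ ∑ i, ∑ j, (A i j)^2 :=
    Finset.sum_nonneg fun i _ => Finset.sum_nonneg fun j _ => sq_nonneg _
  -- measurability of the integrand
  have hfm : AEStronglyMeasurable (fun z : Fin n → ℝ => Real.sqrt (∑ i, (∑ j, A i j * z j)^2)) μ := by
    apply Measurable.aestronglyMeasurable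
    exact (Finset.measurable_sum _ fun i _ => (meas_S (A i)).pow_const 2).sqrt
  -- integrability of the integrand
  have habs : Integrable (fun z : Fin n → ℝ => ∑ i, |∑ j, A i j * z j|) μ :=
    integrable_finset_sum _ fun i _ => integrable_abs_S (A i)
  have hsqrt_le : ∀ z : Fin n → ℝ,
      Real.sqrt (∑ i, (∑ j, A i j * z j)^2) ≤ ∑ i, |∑ j, A i j * z j| := by
    intro z
    have h1 : ∑ i, (∑ j, A i j * z j)^2 ≤ (∑ i, |∑ j, A i j * z j|)^2 := by
      have := Finset.sum_sq_le_sq_sum_of_nonneg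
        (s := Finset.univ) (f := fun i => |∑ j, A i j * z j|) (fun i _ => abs_nonneg _)
      simpa [sq_abs] using this
    calc Real.sqrt (∑ i, (∑ j, A i j * z j)^2)
        ≤ Real.sqrt ((∑ i, |∑ j, A i j * z j|)^2) := Real.sqrt_le_sqrt h1
      _ = ∑ i, |∑ j, A i j * z j| :=
          Real.sqrt_sq (Finset.sum_nonneg fun i _ => abs_nonneg _)
  have hf : Integrable (fun z : Fin n → ℝ => Real.sqrt (∑ i, (∑ j, A i j * z j)^2)) μ := by
    refine habs.mono' hfm ?_
    filter_upwards with z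
    rw [Real.norm_eq_abs, abs_of_nonneg (Real.sqrt_nonneg _)]
    exact hsqrt_le z
  by_cases h0 : ∑ i, ∑ j, (A i j)^2 = 0
  · rw [h0, Real.sqrt_zero, mul_zero]
    exact integral_nonneg fun z => Real.sqrt_nonneg _
  · set F : ℝ := Real.sqrt (∑ i, ∑ j, (A i j)^2) with hF
    have hFpos : 0 < F := Real.sqrt_pos.mpr (lt_of_le_of_ne hSS_nonneg (Ne.symm h0))
    have hFsq : F^2 = ∑ i, ∑ j, (A i j)^2 := Real.sq_sqrt hSS_nonneg
    have hg : Integrable (fun z : Fin n → ℝ => ∑ i, c i * |∑ j, A i j * z j|) μ :=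
      integrable_finset_sum _ fun i _ => (integrable_abs_S (A i)).const_mul (c i)
    -- pointwise Cauchy-Schwarz
    have hpt : ∀ z : Fin n → ℝ,
        ∑ i, c i * |∑ j, A i j * z j| ≤ F * Real.sqrt (∑ i, (∑ j, A i j * z j)^2) := by
      intro z
      have hcs := Finset.sum_mul_sq_le_sq_mul_sq Finset.univ c (fun i => |∑ j, A i j * z j|)
      have hnn : 0 ≤ ∑ i, c i * |∑ j, A i j * z j| :=
        Finset.sum_nonneg fun i _ => mul_nonneg (hc_nonneg i) (abs_nonneg _)
      calc ∑ i, c i * |∑ j, A i j * z j|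
          = Real.sqrt ((∑ i, c i * |∑ j, A i j * z j|)^2) := (Real.sqrt_sq hnn).symm
        _ ≤ Real.sqrt ((∑ i, (c i)^2) * ∑ i, |∑ j, A i j * z j|^2) :=
            Real.sqrt_le_sqrt hcs
        _ = F * Real.sqrt (∑ i, (∑ j, A i j * z j)^2) := by
            rw [Real.sqrt_mul (Finset.sum_nonneg fun i _ => sq_nonneg _)]
            congr 1
            · rw [hF]
              congr 1
              exact Finset.sum_congr rfl fun i _ => hci_sq i
            · congr 1
              exact Finset.sum_congr rfl fun i _ => (sq_abs _)
    -- integral of the lower bound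
    have hI : ∫ z, (∑ i, c i * |∑ j, A i j * z j|) ∂μ
        = Real.sqrt (2 / π) * ∑ i, ∑ j, (A i j)^2 := by
      rw [integral_finset_sum _ fun i _ => (integrable_abs_S (A i)).const_mul (c i)]
      have : ∀ i, ∫ z, c i * |∑ j, A i j * z j| ∂μ
          = Real.sqrt (2 / π) * ∑ j, (A i j)^2 := by
        intro i
        rw [integral_const_mul, E_abs_S,
          show Real.sqrt (∑ j, (A i j)^2) = c i from rfl, ← hci_sq i]
        ring
      rw [Finset.sum_congr rfl fun i _ => this i, ← Finset.mul_sum]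
    have hmono : ∫ z, (∑ i, c i * |∑ j, A i j * z j|) ∂μ
        ≤ ∫ z, F * Real.sqrt (∑ i, (∑ j, A i j * z j)^2) ∂μ :=
      integral_mono hg (hf.const_mul F) hpt
    rw [hI, integral_const_mul] at hmono
    have hgoal : Real.sqrt (2 / π) * (∑ i, ∑ j, (A i j)^2)
        = F * (Real.sqrt (2 / π) * F) := by
      rw [← hFsq]; ring
    rw [hgoal] at hmono
    exact le_of_mul_le_mul_left hmono hFpos
end

section
/- Let a⁽¹⁾ ∈ ℝ^{d₁} and a⁽²⁾ ∈ ℝ^{d₂} be independent standard Gaussian vectors and let M be a fixed d₁×d₂ real matrix. Then E|⟨a⁽¹⁾, M a⁽²⁾⟩| ≥ (2/π)‖M‖_F and E|⟨a⁽¹⁾, M a⁽²⁾⟩| ≤ √(2/π)‖M‖_F. -/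
open MeasureTheory ProbabilityTheory Real Filter Set
open scoped ENNReal NNReal


section Onedim
local notation "g0" => gaussianPDFReal 0 1


lemma g0_eq' : gaussianPDFReal 0 1 = fun t => (√(2 * π))⁻¹ * rexp (-(1/2) * t ^ 2) := by
  funext t
  simp only [gaussianPDFReal_def]
  norm_num
  exact Or.inl (by ring)

lemma int_abs_g0 : Integrable (fun t : ℝ => |t| * g0 t) := by
  have h := ((integrable_mul_exp_neg_mul_sq (by norm_num : (0:ℝ) < 1/2)).abs).const_mul (√(2 * π))⁻¹
  refine h.congr ?_
  filter_upwards with t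
  rw [g0_eq']
  rw [abs_mul, abs_of_pos (exp_pos _)]
  ring

lemma int_id_g0 : Integrable (fun t : ℝ => t * g0 t) := by
  have h := (integrable_mul_exp_neg_mul_sq (by norm_num : (0:ℝ) < 1/2)).const_mul (√(2 * π))⁻¹
  refine h.congr ?_
  filter_upwards with t
  rw [g0_eq']
  ring

lemma int_sq_g0 : Integrable (fun t : ℝ => t ^ 2 * g0 t) := by
  have h0 : Integrable (fun x : ℝ => x ^ (2:ℝ) * rexp (-(1/2) * x ^ 2)) :=
    integrable_rpow_mul_exp_neg_mul_sq (by norm_num : (0:ℝ) < 1/2) (by norm_num : (-1:ℝ) < 2)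
  have h : Integrable (fun x : ℝ => x ^ (2:ℕ) * rexp (-(1/2) * x ^ 2)) := by
    refine h0.congr ?_
    filter_upwards with t
    rw [show ((2:ℝ) = ((2:ℕ):ℝ)) by norm_num, Real.rpow_natCast]
  have h2 := h.const_mul (√(2 * π))⁻¹
  refine h2.congr ?_
  filter_upwards with t
  rw [g0_eq']
  ring

lemma integral_abs_g0 : ∫ t : ℝ, |t| * g0 t = √(2 / π) := by
  have hIoi1 : ∫ x in Ioi (0:ℝ), x * rexp (-(1/2) * x ^ 2) = 1 := by
    have hd : ∀ x ∈ Ici (0:ℝ), HasDerivAt (fun y => -rexp (-(1/2) * y ^ 2))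
        (x * rexp (-(1/2) * x ^ 2)) x := by
      intro x _
      have h := (((hasDerivAt_pow 2 x).const_mul (-(1/2 : ℝ))).exp).neg
      refine h.congr_deriv ?_
      ring_nf
    have hi : IntegrableOn (fun x => x * rexp (-(1/2) * x ^ 2)) (Ioi 0) :=
      (integrable_mul_exp_neg_mul_sq (by norm_num : (0:ℝ) < 1/2)).integrableOn
    have ht : Tendsto (fun y => -rexp (-(1/2) * y ^ 2)) atTop (nhds (-0)) := by
      refine Tendsto.neg (Real.tendsto_exp_atBot.comp ?_)
      exact (tendsto_pow_atTop (two_ne_zero)).const_mul_atTop_of_neg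
        (by norm_num : (-(1/2):ℝ) < 0)
    have := integral_Ioi_of_hasDerivAt_of_tendsto' hd hi ht
    simpa using this
  have habs : ∫ x : ℝ, |x| * rexp (-(1/2) * x ^ 2) = 2 := by
    have := integral_comp_abs (f := fun x : ℝ => x * rexp (-(1/2) * x ^ 2))
    rw [hIoi1, mul_one] at this
    have heq : ∫ x : ℝ, |x| * rexp (-(1/2) * x ^ 2) = ∫ x : ℝ, |x| * rexp (-(1/2) * |x| ^ 2) := by
      congr 1 with x
      rw [sq_abs]
    rw [heq, this]
  rw [g0_eq']
  have : ∫ t : ℝ, |t| * ((√(2 * π))⁻¹ * rexp (-(1/2) * t ^ 2))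
      = (√(2 * π))⁻¹ * ∫ t : ℝ, |t| * rexp (-(1/2) * t ^ 2) := by
    rw [← integral_const_mul]
    congr 1 with t
    ring
  rw [this, habs]
  rw [show (2:ℝ)/π = 2^2/(2*π) by ring, Real.sqrt_div (by positivity), Real.sqrt_sq (by norm_num : (0:ℝ) ≤ 2)]
  ring

lemma integral_id_g0 : ∫ t : ℝ, t * g0 t = 0 := by
  have h := integral_neg_eq_self (fun t : ℝ => t * g0 t) volume
  have heq : ∀ t : ℝ, (-t) * g0 (-t) = -(t * g0 t) := by
    intro t
    rw [g0_eq']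
    simp only
    rw [neg_pow]
    ring_nf
  rw [show (∫ x : ℝ, (fun t : ℝ => t * g0 t) (-x)) = ∫ x : ℝ, -(x * g0 x) by
    congr 1 with x; exact heq x] at h
  rw [integral_neg] at h
  linarith

lemma integral_sq_g0 : ∫ t : ℝ, t ^ 2 * g0 t = 1 := by
  have hb : (0:ℝ) < 1/2 := by norm_num
  have hint_e : Integrable (fun x : ℝ => rexp (-(1/2) * x ^ 2)) := integrable_exp_neg_mul_sq hb
  have hint_sq : Integrable (fun x : ℝ => x ^ 2 * rexp (-(1/2) * x ^ 2)) := by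
    have h0 : Integrable (fun x : ℝ => x ^ (2:ℝ) * rexp (-(1/2) * x ^ 2)) :=
      integrable_rpow_mul_exp_neg_mul_sq hb (by norm_num : (-1:ℝ) < 2)
    refine h0.congr ?_
    filter_upwards with t
    rw [show ((2:ℝ) = ((2:ℕ):ℝ)) by norm_num, Real.rpow_natCast]
  have hIoi : ∫ x in Ioi (0:ℝ), (x ^ 2 * rexp (-(1/2) * x ^ 2) - rexp (-(1/2) * x ^ 2)) = 0 := by
    have hd : ∀ x ∈ Ici (0:ℝ), HasDerivAt (fun y => -(y * rexp (-(1/2) * y ^ 2)))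
        (x ^ 2 * rexp (-(1/2) * x ^ 2) - rexp (-(1/2) * x ^ 2)) x := by
      intro x _
      have h1 : HasDerivAt (fun y : ℝ => rexp (-(1/2) * y ^ 2))
          (-(1/2 : ℝ) * (2 * x) * rexp (-(1/2) * x ^ 2)) x := by
        have := ((hasDerivAt_pow 2 x).const_mul (-(1/2 : ℝ))).exp
        convert this using 1
        ring_nf
      have h2 := ((hasDerivAt_id x).mul h1).neg
      refine h2.congr_deriv ?_
      simp only [id]
      ring
    have hi : IntegrableOn (fun x : ℝ => x ^ 2 * rexp (-(1/2) * x ^ 2) - rexp (-(1/2) * x ^ 2)) (Ioi 0) :=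
      (hint_sq.sub hint_e).integrableOn
    have ht : Tendsto (fun y : ℝ => -(y * rexp (-(1/2) * y ^ 2))) atTop (nhds (-0)) := by
      refine Tendsto.neg ?_
      have hlo := rpow_mul_exp_neg_mul_sq_isLittleO_exp_neg hb 1
      have h0 : Tendsto (fun x : ℝ => rexp (-(1/2) * x)) atTop (nhds 0) := by
        have : Tendsto (fun x : ℝ => -(1/2) * x) atTop atBot :=
          Tendsto.const_mul_atTop_of_neg (by norm_num) tendsto_id
        exact Real.tendsto_exp_atBot.comp this
      have h1 := hlo.tendsto_zero_of_tendsto h0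
      refine h1.congr' ?_
      filter_upwards [eventually_gt_atTop (0:ℝ)] with y hy
      rw [Real.rpow_one]
    have := integral_Ioi_of_hasDerivAt_of_tendsto' hd hi ht
    simpa using this
  have hsplit : ∫ x in Ioi (0:ℝ), x ^ 2 * rexp (-(1/2) * x ^ 2)
      = ∫ x in Ioi (0:ℝ), rexp (-(1/2) * x ^ 2) := by
    have h4 : (∫ x in Ioi (0:ℝ), (x ^ 2 * rexp (-(1/2) * x ^ 2) - rexp (-(1/2) * x ^ 2)))
        = (∫ x in Ioi (0:ℝ), x ^ 2 * rexp (-(1/2) * x ^ 2))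
          - ∫ x in Ioi (0:ℝ), rexp (-(1/2) * x ^ 2) :=
      integral_sub hint_sq.integrableOn hint_e.integrableOn
    rw [h4] at hIoi
    linarith
  have hfull_sq : ∫ x : ℝ, x ^ 2 * rexp (-(1/2) * x ^ 2) = √(2 * π) := by
    have h1 := integral_comp_abs (f := fun x : ℝ => x ^ 2 * rexp (-(1/2) * x ^ 2))
    have h2 := integral_comp_abs (f := fun x : ℝ => rexp (-(1/2) * x ^ 2))
    have hg : ∫ x : ℝ, rexp (-(1/2) * x ^ 2) = √(2 * π) := by
      have h3 := integral_gaussian (1/2 : ℝ)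
      rw [show π/(1/2 : ℝ) = 2 * π by ring] at h3
      exact h3
    calc ∫ x : ℝ, x ^ 2 * rexp (-(1/2) * x ^ 2)
        = ∫ x : ℝ, |x| ^ 2 * rexp (-(1/2) * |x| ^ 2) := by
          congr 1 with x; rw [sq_abs]
      _ = 2 * ∫ x in Ioi (0:ℝ), rexp (-(1/2) * x ^ 2) := by rw [h1, hsplit]
      _ = ∫ x : ℝ, rexp (-(1/2) * |x| ^ 2) := h2.symm
      _ = ∫ x : ℝ, rexp (-(1/2) * x ^ 2) := by congr 1 with x; rw [sq_abs]
      _ = √(2 * π) := hg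
  rw [g0_eq']
  have hre : ∫ t : ℝ, t ^ 2 * ((√(2 * π))⁻¹ * rexp (-(1/2) * t ^ 2))
      = (√(2 * π))⁻¹ * ∫ t : ℝ, t ^ 2 * rexp (-(1/2) * t ^ 2) := by
    rw [← integral_const_mul]
    congr 1 with t
    ring
  rw [hre, hfull_sq, inv_mul_cancel₀]
  positivity

end Onedim

lemma lintegral_pi_prod {n : ℕ} (μ : Measure ℝ) [SigmaFinite μ] (g : Fin n → ℝ → ℝ≥0∞)
    (hg : ∀ i, Measurable (g i)) :
    ∫⁻ y, ∏ i, g i (y i) ∂(Measure.pi fun _ : Fin n => μ) = ∏ i, ∫⁻ x, g i x ∂μ := by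
  induction n with
  | zero => simp
  | succ n ih =>
    have hmp := (measurePreserving_piFinSuccAbove (fun _ : Fin (n+1) => μ) 0).symm
    have hGm : Measurable (fun y : Fin (n+1) → ℝ => ∏ i, g i (y i)) :=
      Finset.measurable_prod _ fun i _ => (hg i).comp (measurable_pi_apply i)
    rw [← hmp.lintegral_comp hGm]
    have heq : ∀ z : ℝ × (Fin n → ℝ),
        (∏ i, g i (((MeasurableEquiv.piFinSuccAbove (fun _ : Fin (n+1) => ℝ) 0).symm z) i))
          = g 0 z.1 * ∏ j : Fin n, g j.succ (z.2 j) := by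
      rintro ⟨a, x⟩
      simp [MeasurableEquiv.piFinSuccAbove_symm_apply, Fin.insertNthEquiv,
        Fin.prod_univ_succ, Fin.insertNth_zero, Fin.zero_succAbove]
    simp_rw [heq]
    rw [lintegral_prod_mul (f := g 0) (g := fun x : Fin n → ℝ => ∏ j, g j.succ (x j))
      ((hg 0).aemeasurable)
      (Finset.measurable_prod _ fun (j : Fin n) _ =>
        ((hg j.succ).comp (measurable_pi_apply j))).aemeasurable]
    rw [ih (fun j => g j.succ) (fun j => hg j.succ)]
    rw [Fin.prod_univ_succ]

lemma pi_withDensity_nnreal {n : ℕ} (g : ℝ → ℝ≥0) (hg : Measurable g) :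
    Measure.pi (fun _ : Fin n => (volume : Measure ℝ).withDensity (fun t => (g t : ℝ≥0∞)))
      = (volume : Measure (Fin n → ℝ)).withDensity
          (fun y => ((∏ i, g (y i) : ℝ≥0) : ℝ≥0∞)) := by
  refine Measure.pi_eq fun s hs => ?_
  rw [withDensity_apply _ (MeasurableSet.univ_pi hs)]
  have hGm : Measurable (fun y : Fin n → ℝ => ((∏ i, g (y i) : ℝ≥0) : ℝ≥0∞)) := by
    push_cast
    exact Finset.measurable_prod _ fun i _ =>
      hg.coe_nnreal_ennreal.comp (measurable_pi_apply i)
  rw [← lintegral_indicator (MeasurableSet.univ_pi hs)]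
  have hind : ∀ y : Fin n → ℝ,
      (Set.univ.pi s).indicator (fun y => ((∏ i, g (y i) : ℝ≥0) : ℝ≥0∞)) y
        = ∏ i, (s i).indicator (fun t => (g t : ℝ≥0∞)) (y i) := by
    intro y
    by_cases h : y ∈ Set.univ.pi s
    · rw [Set.indicator_of_mem h]
      rw [Set.mem_univ_pi] at h
      push_cast
      exact Finset.prod_congr rfl fun i _ => (Set.indicator_of_mem (h i) (fun t => (g t : ℝ≥0∞))).symm
    · rw [Set.indicator_of_notMem h]
      rw [Set.mem_univ_pi] at h
      push_neg at h
      obtain ⟨i, hi⟩ := h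
      exact (Finset.prod_eq_zero (Finset.mem_univ i)
        (by rw [Set.indicator_of_notMem hi])).symm
  simp_rw [hind]
  rw [show (volume : Measure (Fin n → ℝ)) = Measure.pi fun _ => volume from volume_pi]
  rw [lintegral_pi_prod volume _ (fun i => hg.coe_nnreal_ennreal.indicator (hs i))]
  refine Finset.prod_congr rfl fun i _ => ?_
  rw [withDensity_apply _ (hs i), ← lintegral_indicator (hs i)]

noncomputable def gN : ℝ → ℝ≥0 := fun t => Real.toNNReal (gaussianPDFReal 0 1 t)
lemma gN_meas : Measurable gN := (measurable_gaussianPDFReal 0 1).real_toNNReal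
lemma gN_coe (t : ℝ) : (gN t : ℝ) = gaussianPDFReal 0 1 t :=
  Real.coe_toNNReal _ (gaussianPDFReal_nonneg _ _ _)

lemma gaussianReal_eq_withDensity :
    gaussianReal 0 1 = (volume : Measure ℝ).withDensity (fun t => (gN t : ℝ≥0∞)) := by
  rw [gaussianReal_of_var_ne_zero 0 one_ne_zero]
  rfl


lemma nu_eq (n : ℕ) : (Measure.pi fun _ : Fin n => gaussianReal 0 1)
    = (volume : Measure (Fin n → ℝ)).withDensity
        (fun y => ((∏ i, gN (y i) : ℝ≥0) : ℝ≥0∞)) := by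
  rw [gaussianReal_eq_withDensity]
  exact pi_withDensity_nnreal gN gN_meas

lemma gN_prod_meas {n : ℕ} : Measurable (fun y : Fin n → ℝ => ∏ i, gN (y i)) :=
  Finset.measurable_prod _ fun i _ => gN_meas.comp (measurable_pi_apply i)

lemma nu_integral {n : ℕ} (f : (Fin n → ℝ) → ℝ) :
    ∫ y, f y ∂(Measure.pi fun _ : Fin n => gaussianReal 0 1)
      = ∫ y, (∏ i, gaussianPDFReal 0 1 (y i)) * f y := by
  rw [nu_eq, integral_withDensity_eq_integral_smul gN_prod_meas f]
  congr 1 with y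
  rw [NNReal.smul_def, NNReal.coe_prod, smul_eq_mul]
  simp_rw [gN_coe]

lemma nu_integrable_iff {n : ℕ} (f : (Fin n → ℝ) → ℝ) :
    Integrable f (Measure.pi fun _ : Fin n => gaussianReal 0 1)
      ↔ Integrable (fun y => (∏ i, gaussianPDFReal 0 1 (y i)) * f y) volume := by
  rw [nu_eq, integrable_withDensity_iff_integrable_smul gN_prod_meas]
  refine integrable_congr (Filter.Eventually.of_forall fun y => ?_)
  show (∏ i, gN (y i)) • f y = _
  rw [NNReal.smul_def, NNReal.coe_prod, smul_eq_mul]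
  simp_rw [gN_coe]

lemma nu_prod {n : ℕ} (f : Fin n → ℝ → ℝ)
    (hf : ∀ i, Integrable (fun t => f i t * gaussianPDFReal 0 1 t)) :
    Integrable (fun y => ∏ i, f i (y i)) (Measure.pi fun _ : Fin n => gaussianReal 0 1)
    ∧ ∫ y, ∏ i, f i (y i) ∂(Measure.pi fun _ : Fin n => gaussianReal 0 1)
        = ∏ i, ∫ t, f i t * gaussianPDFReal 0 1 t := by
  have key : ∀ y : Fin n → ℝ, (∏ i, gaussianPDFReal 0 1 (y i)) * (∏ i, f i (y i))
      = ∏ i, (f i (y i) * gaussianPDFReal 0 1 (y i)) := by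
    intro y
    rw [← Finset.prod_mul_distrib]
    exact Finset.prod_congr rfl fun i _ => mul_comm _ _
  constructor
  · rw [nu_integrable_iff]
    refine (MeasureTheory.Integrable.fintype_prod (𝕜 := ℝ)
      (f := fun i t => f i t * gaussianPDFReal 0 1 t) hf).congr ?_
    exact Filter.Eventually.of_forall fun y => (key y).symm
  · rw [nu_integral]
    simp_rw [key]
    exact MeasureTheory.integral_fintype_prod_eq_prod (ι := Fin n)
      (fun i t => f i t * gaussianPDFReal 0 1 t)

lemma prod_g0_eq_norm {n : ℕ} (x : EuclideanSpace ℝ (Fin n)) :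
    (∏ i, gaussianPDFReal 0 1 (x i)) = (√(2*π))⁻¹ ^ n * rexp (-(1/2) * ‖x‖ ^ 2) := by
  rw [g0_eq']
  simp only
  rw [Finset.prod_mul_distrib, Finset.prod_const, Finset.card_univ, Fintype.card_fin,
    ← Real.exp_sum]
  congr 1
  rw [EuclideanSpace.norm_eq, Real.sq_sqrt (by positivity)]
  congr 1
  rw [Finset.mul_sum]
  refine Finset.sum_congr rfl fun i _ => ?_
  rw [Real.norm_eq_abs, sq_abs]

lemma nu_abs_eval {n : ℕ} (j : Fin n) :
    Integrable (fun y : Fin n → ℝ => |y j|) (Measure.pi fun _ : Fin n => gaussianReal 0 1)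
    ∧ ∫ y, |y j| ∂(Measure.pi fun _ : Fin n => gaussianReal 0 1) = √(2/π) := by
  have h := nu_prod (fun i t => if i = j then |t| else 1) ?hint
  case hint =>
    intro i
    by_cases hij : i = j
    · simpa [hij] using int_abs_g0
    · simpa [hij] using integrable_gaussianPDFReal 0 1
  have hprod : ∀ y : Fin n → ℝ, (∏ i, if i = j then |y i| else 1) = |y j| := by
    intro y
    rw [Finset.prod_ite_eq' Finset.univ j (fun i => |y i|)]
    simp
  have hval : (∏ i, ∫ t, (if i = j then |t| else 1) * gaussianPDFReal 0 1 t) = √(2/π) := by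
    have : ∀ i : Fin n, (∫ t, (if i = j then |t| else 1) * gaussianPDFReal 0 1 t)
        = if i = j then √(2/π) else 1 := by
      intro i
      by_cases hij : i = j
      · simp only [hij, if_true]
        exact integral_abs_g0
      · simp only [hij, if_false, one_mul]
        exact integral_gaussianPDFReal_eq_one 0 one_ne_zero
    simp_rw [this]
    rw [Finset.prod_ite_eq' Finset.univ j (fun _ => √(2/π))]
    simp
  constructor
  · refine h.1.congr (Filter.Eventually.of_forall fun y => ?_)
    exact hprod y
  · rw [← hval, ← h.2]
    refine integral_congr_ae (Filter.Eventually.of_forall fun y => ?_)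
    exact (hprod y).symm

lemma lemA {n : ℕ} (v : Fin n → ℝ) :
    (∫ y, |∑ j, v j * y j| ∂(Measure.pi fun _ : Fin n => gaussianReal 0 1))
      = √(2/π) * √(∑ j, v j ^ 2) := by
  by_cases hv : v = 0
  · simp [hv]
  obtain _ | m := n
  · exact absurd (funext fun j => j.elim0) hv
  set E := EuclideanSpace ℝ (Fin (m+1))
  set w : E := (WithLp.equiv 2 _).symm v with hw_def
  have hw_app : ∀ j, w j = v j := fun j => rfl
  have hw_norm : ‖w‖ = √(∑ j, v j ^ 2) := by
    rw [EuclideanSpace.norm_eq]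
    congr 1
    refine Finset.sum_congr rfl fun j _ => ?_
    rw [hw_app, Real.norm_eq_abs, sq_abs]
  have hw0 : w ≠ 0 := by
    intro h
    apply hv
    funext j
    have := congrArg (fun z : E => z j) h
    simpa [hw_app] using this
  have hwpos : 0 < ‖w‖ := norm_pos_iff.mpr hw0
  set u : E := ‖w‖⁻¹ • w with hu_def
  have hu_norm : ‖u‖ = 1 := by
    rw [hu_def, norm_smul, norm_inv, norm_norm, inv_mul_cancel₀ hwpos.ne']
  -- orthonormal basis with b 0 = u
  have hon : Orthonormal ℝ (Set.restrict {(0 : Fin (m+1))} (fun _ => u)) := by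
    constructor
    · intro i
      exact hu_norm
    · intro i j hij
      exact absurd (Subtype.ext ((i.2.trans j.2.symm))) hij
  obtain ⟨b, hb⟩ := hon.exists_orthonormalBasis_extension_of_card_eq
    (by simp [E, finrank_euclideanSpace]) 
  have hb0 : b 0 = u := hb 0 rfl
  have hT := b.measurePreserving_repr_symm
  have hTemb : MeasurableEmbedding (b.repr.symm : E → E) :=
    b.repr.symm.toHomeomorph.measurableEmbedding
  rw [nu_integral]
  have hstep2 := (EuclideanSpace.volume_preserving_symm_measurableEquiv_toLp (Fin (m+1))).integral_comp
      (MeasurableEquiv.measurableEmbedding _)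
      (fun y : Fin (m+1) → ℝ => (∏ i, gaussianPDFReal 0 1 (y i)) * |∑ j, v j * y j|)
  rw [← hstep2]
  have hcoe : ∀ (x : E) (i : Fin (m+1)),
      ((MeasurableEquiv.toLp 2 (Fin (m+1) → ℝ)).symm x) i = x i := by
    intro x i
    rfl
  have hF : (fun x : E => (∏ i, gaussianPDFReal 0 1
        (((MeasurableEquiv.toLp 2 (Fin (m+1) → ℝ)).symm x) i))
      * |∑ j, v j * ((MeasurableEquiv.toLp 2 (Fin (m+1) → ℝ)).symm x) j|)
      = fun x : E => (∏ i, gaussianPDFReal 0 1 (x i)) * |∑ j, v j * x j| := by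
    funext x
    simp_rw [hcoe]
  rw [hF]
  have hrot := hT.integral_comp hTemb
    (fun x : E => (∏ i, gaussianPDFReal 0 1 (x i)) * |∑ j, v j * x j|)
  rw [← hrot]
  have hpoint : ∀ x : E,
      (∏ i, gaussianPDFReal 0 1 ((b.repr.symm x) i)) * |∑ j, v j * (b.repr.symm x) j|
        = ‖w‖ * ((∏ i, gaussianPDFReal 0 1 (x i)) * |x 0|) := by
    intro x
    have h1 : (∏ i, gaussianPDFReal 0 1 ((b.repr.symm x) i))
        = ∏ i, gaussianPDFReal 0 1 (x i) := by
      rw [prod_g0_eq_norm (b.repr.symm x), prod_g0_eq_norm x,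
        LinearIsometryEquiv.norm_map]
    have h2 : ∑ j, v j * (b.repr.symm x) j = ‖w‖ * x 0 := by
      have hinner : (inner ℝ w (b.repr.symm x) : ℝ) = ∑ j, v j * (b.repr.symm x) j := by
        rw [PiLp.inner_apply]
        refine Finset.sum_congr rfl fun j _ => ?_
        rw [RCLike.inner_apply', starRingEnd_apply, star_trivial, hw_app]
      have hw_smul : w = ‖w‖ • u := by
        rw [hu_def, smul_smul, mul_inv_cancel₀ hwpos.ne', one_smul]
      have : (inner ℝ w (b.repr.symm x) : ℝ) = ‖w‖ * (inner ℝ u (b.repr.symm x) : ℝ) := by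
        conv_lhs => rw [hw_smul]
        rw [real_inner_smul_left]
      rw [← hinner, this, ← hb0, ← b.repr_apply_apply, LinearIsometryEquiv.apply_symm_apply]
    rw [h1, h2, abs_mul, abs_of_pos hwpos]
    ring
  simp_rw [hpoint]
  rw [integral_const_mul]
  have hback := (EuclideanSpace.volume_preserving_symm_measurableEquiv_toLp (Fin (m+1))).integral_comp
      (MeasurableEquiv.measurableEmbedding _)
      (fun y : Fin (m+1) → ℝ => (∏ i, gaussianPDFReal 0 1 (y i)) * |y 0|)
  have hFb : (fun x : E => (∏ i, gaussianPDFReal 0 1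
        (((MeasurableEquiv.toLp 2 (Fin (m+1) → ℝ)).symm x) i))
      * |((MeasurableEquiv.toLp 2 (Fin (m+1) → ℝ)).symm x) 0|)
      = fun x : E => (∏ i, gaussianPDFReal 0 1 (x i)) * |x 0| := by
    funext x
    simp_rw [hcoe]
  rw [hFb] at hback
  rw [hback, ← nu_integral (fun y : Fin (m+1) → ℝ => |y 0|), (nu_abs_eval 0).2,
    hw_norm, mul_comm]

lemma nu_pair {n : ℕ} (j k : Fin n) :
    Integrable (fun y : Fin n → ℝ => y j * y k) (Measure.pi fun _ : Fin n => gaussianReal 0 1)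
    ∧ ∫ y, y j * y k ∂(Measure.pi fun _ : Fin n => gaussianReal 0 1)
        = if j = k then 1 else 0 := by
  classical
  by_cases hjk : j = k
  · subst hjk
    have h := nu_prod (fun i t => if i = j then t ^ 2 else 1) ?hint
    case hint =>
      intro i
      by_cases hij : i = j
      · simpa [hij] using int_sq_g0
      · simpa [hij] using integrable_gaussianPDFReal 0 1
    have hprod : ∀ y : Fin n → ℝ, (∏ i, if i = j then (y i) ^ 2 else 1) = y j * y j := by
      intro y
      rw [Finset.prod_ite_eq' Finset.univ j (fun i => (y i) ^ 2)]
      simp [sq]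
    have hval : (∏ i, ∫ t, (if i = j then t ^ 2 else 1) * gaussianPDFReal 0 1 t) = 1 := by
      have heach : ∀ i : Fin n, (∫ t, (if i = j then t ^ 2 else 1) * gaussianPDFReal 0 1 t)
          = (1 : ℝ) := by
        intro i
        by_cases hij : i = j
        · simpa [hij] using integral_sq_g0
        · simpa [hij] using integral_gaussianPDFReal_eq_one 0 one_ne_zero
      simp_rw [heach]
      simp
    refine ⟨h.1.congr (Filter.Eventually.of_forall fun y => hprod y), ?_⟩
    simp only [if_pos rfl]
    rw [← hval, ← h.2]
    exact integral_congr_ae (Filter.Eventually.of_forall fun y => (hprod y).symm)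
  · have h := nu_prod (fun i t => (if i = j then t else 1) * (if i = k then t else 1)) ?hint
    case hint =>
      intro i
      by_cases hij : i = j
      · simpa [hij, hjk] using int_id_g0
      · by_cases hik : i = k
        · simpa [hij, hik, Ne.symm hjk] using int_id_g0
        · simpa [hij, hik] using integrable_gaussianPDFReal 0 1
    have hprod : ∀ y : Fin n → ℝ,
        (∏ i, (if i = j then y i else 1) * (if i = k then y i else 1)) = y j * y k := by
      intro y
      rw [Finset.prod_mul_distrib, Finset.prod_ite_eq' Finset.univ j (fun i => y i),
        Finset.prod_ite_eq' Finset.univ k (fun i => y i)]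
      simp
    have hval : (∏ i, ∫ t, ((if i = j then t else 1) * (if i = k then t else 1))
        * gaussianPDFReal 0 1 t) = 0 := by
      refine Finset.prod_eq_zero (Finset.mem_univ j) ?_
      have heq : (fun t : ℝ => ((if j = j then t else 1) * (if j = k then t else 1))
          * gaussianPDFReal 0 1 t) = fun t : ℝ => t * gaussianPDFReal 0 1 t := by
        funext t
        rw [if_pos rfl, if_neg hjk, mul_one]
      rw [heq]
      exact integral_id_g0
    refine ⟨h.1.congr (Filter.Eventually.of_forall fun y => hprod y), ?_⟩
    simp only [if_neg hjk]
    calc ∫ y, y j * y k ∂(Measure.pi fun _ : Fin n => gaussianReal 0 1)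
        = ∫ y, ∏ i, (if i = j then y i else 1) * (if i = k then y i else 1)
            ∂(Measure.pi fun _ : Fin n => gaussianReal 0 1) :=
          integral_congr_ae (Filter.Eventually.of_forall fun y => (hprod y).symm)
      _ = ∏ i, ∫ t, ((if i = j then t else 1) * (if i = k then t else 1))
            * gaussianPDFReal 0 1 t := h.2
      _ = 0 := hval

lemma nu_second_moment {n : ℕ} (v : Fin n → ℝ) :
    Integrable (fun y : Fin n → ℝ => (∑ j, v j * y j) ^ 2)
      (Measure.pi fun _ : Fin n => gaussianReal 0 1)
    ∧ ∫ y, (∑ j, v j * y j) ^ 2 ∂(Measure.pi fun _ : Fin n => gaussianReal 0 1)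
        = ∑ j, v j ^ 2 := by
  classical
  set ν := (Measure.pi fun _ : Fin n => gaussianReal 0 1)
  have hexp : ∀ y : Fin n → ℝ, (∑ j, v j * y j) ^ 2
      = ∑ j, ∑ k, (v j * v k) * (y j * y k) := by
    intro y
    rw [sq, Finset.sum_mul_sum]
    refine Finset.sum_congr rfl fun j _ => Finset.sum_congr rfl fun k _ => ?_
    ring
  have hint_jk : ∀ j k : Fin n, Integrable (fun y : Fin n → ℝ => (v j * v k) * (y j * y k)) ν :=
    fun j k => ((nu_pair j k).1.const_mul _)
  have hint_j : ∀ j : Fin n, Integrable (fun y : Fin n → ℝ => ∑ k, (v j * v k) * (y j * y k)) ν :=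
    fun j => integrable_finset_sum _ (fun k _ => hint_jk j k)
  have hint_sum : Integrable (fun y : Fin n → ℝ => ∑ j, ∑ k, (v j * v k) * (y j * y k)) ν :=
    integrable_finset_sum _ (fun j _ => hint_j j)
  constructor
  · refine hint_sum.congr (Filter.Eventually.of_forall fun y => ?_)
    exact (hexp y).symm
  · calc ∫ y, (∑ j, v j * y j) ^ 2 ∂ν
        = ∫ y, ∑ j, ∑ k, (v j * v k) * (y j * y k) ∂ν :=
          integral_congr_ae (Filter.Eventually.of_forall fun y => hexp y)
      _ = ∑ j, ∫ y, ∑ k, (v j * v k) * (y j * y k) ∂ν :=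
          integral_finset_sum Finset.univ (fun j _ => hint_j j)
      _ = ∑ j, ∑ k, ∫ y, (v j * v k) * (y j * y k) ∂ν :=
          Finset.sum_congr rfl fun j _ => integral_finset_sum _ (fun k _ => hint_jk j k)
      _ = ∑ j, ∑ k, (v j * v k) * (if j = k then (1:ℝ) else 0) := by
          refine Finset.sum_congr rfl fun j _ => Finset.sum_congr rfl fun k _ => ?_
          rw [integral_const_mul, (nu_pair j k).2]
      _ = ∑ j, v j ^ 2 := by
          refine Finset.sum_congr rfl fun j _ => ?_
          rw [Finset.sum_eq_single j]
          · simp [sq]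
          · intro k _ hkj
            simp [Ne.symm hkj]
          · intro h
            exact absurd (Finset.mem_univ j) h

theorem stmt_14 (d₁ d₂ : ℕ) (M : Matrix (Fin d₁) (Fin d₂) ℝ) :
    (2 / Real.pi) * Real.sqrt (∑ i, ∑ j, (M i j) ^ 2) ≤
      (∫ p : (Fin d₁ → ℝ) × (Fin d₂ → ℝ),
        |∑ i, p.1 i * M.mulVec p.2 i|
        ∂((Measure.pi fun _ : Fin d₁ => gaussianReal 0 1).prod
            (Measure.pi fun _ : Fin d₂ => gaussianReal 0 1))) ∧
    (∫ p : (Fin d₁ → ℝ) × (Fin d₂ → ℝ),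
        |∑ i, p.1 i * M.mulVec p.2 i|
        ∂((Measure.pi fun _ : Fin d₁ => gaussianReal 0 1).prod
            (Measure.pi fun _ : Fin d₂ => gaussianReal 0 1))) ≤
      Real.sqrt (2 / Real.pi) * Real.sqrt (∑ i, ∑ j, (M i j) ^ 2) := by
  classical
  set ν₁ := (Measure.pi fun _ : Fin d₁ => gaussianReal 0 1) with hν₁
  set ν₂ := (Measure.pi fun _ : Fin d₂ => gaussianReal 0 1) with hν₂
  set c : ℝ := √(2/π) with hc
  have hc0 : 0 ≤ c := Real.sqrt_nonneg _
  set S : ℝ := ∑ i, ∑ j, (M i j) ^ 2 with hS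
  have hS0 : 0 ≤ S := Finset.sum_nonneg fun i _ => Finset.sum_nonneg fun j _ => sq_nonneg _
  set N : (Fin d₂ → ℝ) → ℝ := fun y => √(∑ i, (M.mulVec y) i ^ 2) with hN
  have hmulVec : ∀ (y : Fin d₂ → ℝ) (i : Fin d₁), M.mulVec y i = ∑ j, M i j * y j := by
    intro y i
    simp [Matrix.mulVec, dotProduct]
  have hN0 : ∀ y, 0 ≤ N y := fun y => Real.sqrt_nonneg _
  -- measurability of the integrand
  have hFmeas : Measurable (fun p : (Fin d₁ → ℝ) × (Fin d₂ → ℝ) =>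
      |∑ i, p.1 i * M.mulVec p.2 i|) := by
    refine Measurable.abs (Finset.measurable_sum _ fun i _ => ?_)
    refine Measurable.mul ((measurable_pi_apply i).comp measurable_fst) ?_
    simp_rw [hmulVec]
    exact Finset.measurable_sum _ fun j _ =>
      (measurable_const.mul ((measurable_pi_apply j).comp measurable_snd))
  -- integrability of the integrand on the product
  have hFint : Integrable (fun p : (Fin d₁ → ℝ) × (Fin d₂ → ℝ) =>
      |∑ i, p.1 i * M.mulVec p.2 i|) (ν₁.prod ν₂) := by
    have hG : Integrable (fun p : (Fin d₁ → ℝ) × (Fin d₂ → ℝ) =>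
        ∑ i, ∑ j, |M i j| * (|p.1 i| * |p.2 j|)) (ν₁.prod ν₂) := by
      refine integrable_finset_sum _ fun i _ => integrable_finset_sum _ fun j _ => ?_
      exact (((nu_abs_eval i).1.mul_prod (nu_abs_eval j).1)).const_mul _
    refine hG.mono' hFmeas.aestronglyMeasurable ?_
    refine Filter.Eventually.of_forall fun p => ?_
    rw [Real.norm_eq_abs, abs_abs]
    calc |∑ i, p.1 i * M.mulVec p.2 i| ≤ ∑ i, |p.1 i * M.mulVec p.2 i| :=
          Finset.abs_sum_le_sum_abs _ _
      _ ≤ ∑ i, ∑ j, |M i j| * (|p.1 i| * |p.2 j|) := by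
          refine Finset.sum_le_sum fun i _ => ?_
          rw [abs_mul, hmulVec]
          calc |p.1 i| * |∑ j, M i j * p.2 j| ≤ |p.1 i| * ∑ j, |M i j * p.2 j| := by
                refine mul_le_mul_of_nonneg_left ?_ (abs_nonneg _)
                exact Finset.abs_sum_le_sum_abs _ _
            _ = ∑ j, |M i j| * (|p.1 i| * |p.2 j|) := by
                rw [Finset.mul_sum]
                refine Finset.sum_congr rfl fun j _ => ?_
                rw [abs_mul]
                ring
  -- Fubini
  have hI : (∫ p : (Fin d₁ → ℝ) × (Fin d₂ → ℝ), |∑ i, p.1 i * M.mulVec p.2 i|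
      ∂(ν₁.prod ν₂)) = c * ∫ y, N y ∂ν₂ := by
    rw [integral_prod_symm _ hFint]
    have hinner : ∀ y, (∫ x, |∑ i, x i * M.mulVec y i| ∂ν₁) = c * N y := by
      intro y
      have hcomm : (fun x : Fin d₁ → ℝ => |∑ i, x i * M.mulVec y i|)
          = fun x => |∑ i, (M.mulVec y) i * x i| := by
        funext x
        congr 1
        exact Finset.sum_congr rfl fun i _ => mul_comm _ _
      rw [hcomm, lemA (fun i => M.mulVec y i)]
    calc ∫ y, (∫ x, |∑ i, x i * M.mulVec y i| ∂ν₁) ∂ν₂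
        = ∫ y, c * N y ∂ν₂ :=
          integral_congr_ae (Filter.Eventually.of_forall fun y => hinner y)
      _ = c * ∫ y, N y ∂ν₂ := integral_const_mul c N
  -- second moment of N
  have hNsq_int : Integrable (fun y => ∑ i, (M.mulVec y) i ^ 2) ν₂ := by
    refine integrable_finset_sum _ fun i _ => ?_
    refine (nu_second_moment (fun j => M i j)).1.congr
      (Filter.Eventually.of_forall fun y => ?_)
    show (∑ j, M i j * y j) ^ 2 = M.mulVec y i ^ 2
    rw [hmulVec]
  have hNsq_val : ∫ y, ∑ i, (M.mulVec y) i ^ 2 ∂ν₂ = S := by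
    rw [integral_finset_sum _ (fun i _ => ?_)]
    · refine Finset.sum_congr rfl fun i _ => ?_
      have heq2 : (∫ y, (M.mulVec y) i ^ 2 ∂ν₂) = ∫ y, (∑ j, M i j * y j) ^ 2 ∂ν₂ := by
        refine integral_congr_ae (Filter.Eventually.of_forall fun y => ?_)
        show M.mulVec y i ^ 2 = (∑ j, M i j * y j) ^ 2
        rw [hmulVec]
      rw [heq2, (nu_second_moment (fun j => M i j)).2]
    · refine (nu_second_moment (fun j => M i j)).1.congr
        (Filter.Eventually.of_forall fun y => ?_)
      show (∑ j, M i j * y j) ^ 2 = M.mulVec y i ^ 2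
      rw [hmulVec]
  have hNmeas : Measurable N := by
    refine Real.continuous_sqrt.measurable.comp (Finset.measurable_sum _ fun i _ => ?_)
    simp_rw [hmulVec]
    exact (Finset.measurable_sum _ fun j _ =>
      (measurable_const.mul (measurable_pi_apply j))).pow_const 2
  have hNsq_eq : ∀ y, N y ^ 2 = ∑ i, (M.mulVec y) i ^ 2 := fun y =>
    Real.sq_sqrt (Finset.sum_nonneg fun i _ => sq_nonneg _)
  have hN_int : Integrable N ν₂ := by
    refine ((integrable_const (1:ℝ)).add hNsq_int).mono' hNmeas.aestronglyMeasurable ?_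
    refine Filter.Eventually.of_forall fun y => ?_
    rw [Real.norm_eq_abs, abs_of_nonneg (hN0 y)]
    show N y ≤ 1 + ∑ i, (M.mulVec y) i ^ 2
    have h1 := hNsq_eq y
    have h2 : 0 ≤ ∑ i, (M.mulVec y) i ^ 2 := Finset.sum_nonneg fun i _ => sq_nonneg _
    nlinarith [sq_nonneg (N y - 1), hN0 y]
  set m : ℝ := ∫ y, N y ∂ν₂ with hm
  have hm0 : 0 ≤ m := integral_nonneg hN0
  -- (∫ N)² ≤ ∫ N²
  have hvar : m ^ 2 ≤ S := by
    have hexp : ∀ y, (N y - m) ^ 2 = (∑ i, (M.mulVec y) i ^ 2) - 2 * m * N y + m ^ 2 := by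
      intro y
      rw [← hNsq_eq y]
      ring
    have hint2 : Integrable (fun y => (N y - m) ^ 2) ν₂ := by
      refine ((hNsq_int.sub ((hN_int.const_mul (2*m)))).add (integrable_const (m^2))).congr
        (Filter.Eventually.of_forall fun y => ?_)
      simp only [Pi.add_apply, Pi.sub_apply]
      exact (hexp y).symm
    have h0 : 0 ≤ ∫ y, (N y - m) ^ 2 ∂ν₂ := integral_nonneg fun y => sq_nonneg _
    have hval : ∫ y, (N y - m) ^ 2 ∂ν₂ = S - 2 * m * m + m ^ 2 := by
      calc ∫ y, (N y - m) ^ 2 ∂ν₂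
          = ∫ y, ((∑ i, (M.mulVec y) i ^ 2) - 2 * m * N y + m ^ 2) ∂ν₂ :=
            integral_congr_ae (Filter.Eventually.of_forall fun y => hexp y)
        _ = (∫ y, ((∑ i, (M.mulVec y) i ^ 2) - 2 * m * N y) ∂ν₂) + ∫ y, (m:ℝ)^2 ∂ν₂ :=
            integral_add (hNsq_int.sub (hN_int.const_mul (2*m))) (integrable_const _)
        _ = ((∫ y, ∑ i, (M.mulVec y) i ^ 2 ∂ν₂) - ∫ y, 2 * m * N y ∂ν₂) + m ^ 2 := by
            rw [integral_sub hNsq_int (hN_int.const_mul (2*m))]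
            congr 1
            simp
        _ = S - 2 * m * m + m ^ 2 := by
            rw [hNsq_val, integral_const_mul]
    rw [hval] at h0
    nlinarith
  have hm_le : m ≤ √S := by
    rw [show S = √S * √S from (Real.mul_self_sqrt hS0).symm] at hvar
    nlinarith [Real.sqrt_nonneg S]
  -- lower bound via Jensen (norm)
  have hlow : c * √S ≤ m := by
    set Φ : (Fin d₂ → ℝ) → EuclideanSpace ℝ (Fin d₁) :=
      fun y => (WithLp.equiv 2 (Fin d₁ → ℝ)).symm (fun i => |M.mulVec y i|) with hΦ
    have hΦapp : ∀ y i, Φ y i = |M.mulVec y i| := fun y i => rfl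
    have hΦnorm : ∀ y, ‖Φ y‖ = N y := by
      intro y
      rw [EuclideanSpace.norm_eq]
      congr 1
      refine Finset.sum_congr rfl fun i _ => ?_
      rw [hΦapp, Real.norm_eq_abs, abs_abs, sq_abs]
    have hΦmeas : Measurable Φ := by
      refine (MeasurableEquiv.toLp 2 (Fin d₁ → ℝ)).measurable.comp ?_
      refine measurable_pi_lambda _ fun i => ?_
      refine Measurable.abs ?_
      simp_rw [hmulVec]
      exact Finset.measurable_sum _ fun j _ => measurable_const.mul (measurable_pi_apply j)
    have hΦint : Integrable Φ ν₂ := by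
      refine ⟨hΦmeas.aestronglyMeasurable, ?_⟩
      refine HasFiniteIntegral.congr' hN_int.2 ?_
      refine Filter.Eventually.of_forall fun y => ?_
      rw [hΦnorm, Real.norm_eq_abs, abs_of_nonneg (hN0 y)]
    have hproj : ∀ i : Fin d₁, (∫ y, Φ y ∂ν₂) i = c * √(∑ j, M i j ^ 2) := by
      intro i
      have h1 := (EuclideanSpace.proj (𝕜 := ℝ) i).integral_comp_comm hΦint
      have h2 : ∀ y, (EuclideanSpace.proj (𝕜 := ℝ) i) (Φ y) = |∑ j, M i j * y j| := by
        intro y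
        show Φ y i = |∑ j, M i j * y j|
        rw [hΦapp, hmulVec]
      simp_rw [h2] at h1
      have h3 : (∫ y, |∑ j, M i j * y j| ∂ν₂) = c * √(∑ j, M i j ^ 2) :=
        lemA (fun j => M i j)
      rw [h3] at h1
      exact h1.symm
    have hnormint : ‖∫ y, Φ y ∂ν₂‖ = c * √S := by
      rw [EuclideanSpace.norm_eq]
      have : ∀ i : Fin d₁, ‖(∫ y, Φ y ∂ν₂) i‖ ^ 2 = (2/π) * ∑ j, M i j ^ 2 := by
        intro i
        rw [hproj i, Real.norm_eq_abs, abs_of_nonneg (by positivity), mul_pow,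
          Real.sq_sqrt (Finset.sum_nonneg fun j _ => sq_nonneg _), hc,
          Real.sq_sqrt (by positivity : (0:ℝ) ≤ 2/π)]
      simp_rw [this]
      rw [← Finset.mul_sum, Real.sqrt_mul (by positivity : (0:ℝ) ≤ 2/π), hc]
    have hle := norm_integral_le_integral_norm Φ (μ := ν₂)
    rw [hnormint] at hle
    calc c * √S ≤ ∫ y, ‖Φ y‖ ∂ν₂ := hle
      _ = m := by
        refine integral_congr_ae (Filter.Eventually.of_forall fun y => ?_)
        exact hΦnorm y
  constructor
  · rw [hI]
    calc (2/π) * √S = c * (c * √S) := by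
          rw [← mul_assoc, hc, Real.mul_self_sqrt (by positivity : (0:ℝ) ≤ 2/π)]
      _ ≤ c * m := by
          exact mul_le_mul_of_nonneg_left hlow hc0
  · rw [hI]
    calc c * m ≤ c * √S := mul_le_mul_of_nonneg_left hm_le hc0
      _ = √(2/π) * √S := by rw [hc]
end
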